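/- For every integer k ≥ 0, the Laurent polynomial Y⁻¹t⁻¹·(I − Yt)·Q_{3k+2}(t)·Yt·(I − Xt) is twin. -/

import Mathlib

/-- The image of (123) under the irreducible 3-dimensional integral representation of A₄. -/
def Xm : Matrix (Fin 3) (Fin 3) ℤ := !![-1, 1, 0; -1, 0, 0; -1, 0, 1]

/-- The image of (142) under the irreducible 3-dimensional integral representation of A₄. -/
def Ym : Matrix (Fin 3) (Fin 3) ℤ := !![0, 0, -1; 0, 1, -1; 1, 0, -1]

/-- The inverse of `Xm`, which equals `Xm ^ 2`. -/
def Xinv : Matrix (Fin 3) (Fin 3) ℤ := Xm ^ 2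

/-- The inverse of `Ym`, which equals `Ym ^ 2`. -/
def Yinv : Matrix (Fin 3) (Fin 3) ℤ := Ym ^ 2

open LaurentPolynomial Finset

/-- 3×3 integer matrices. -/
abbrev M3 : Type := Matrix (Fin 3) (Fin 3) ℤ

/-- Laurent polynomials in `t` with coefficients in `M3`. -/
abbrev L : Type := LaurentPolynomial M3

/-- A Laurent polynomial `f = ∑ d_j t^j` with 3×3 integer matrix coefficients is *twin* if
`d_j = c_j I + c_j' (XYX)` for `j ≡ 0 (mod 3)`, `d_j = a_j (X+Y)` for `j ≡ 1 (mod 3)`,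
`d_j = b_j (X⁻¹+Y⁻¹)` for `j ≡ 2 (mod 3)`, and `a_{3j+1} = b_{3j+2}` for all `j`. -/
def IsTwin (f : L) : Prop :=
  ∃ c c' a b : ℤ → ℤ,
    (∀ j : ℤ, j % 3 = 0 → AddMonoidAlgebra.coeff f j = c j • (1 : M3) + c' j • (Xm * Ym * Xm)) ∧
    (∀ j : ℤ, j % 3 = 1 → AddMonoidAlgebra.coeff f j = a j • (Xm + Ym)) ∧
    (∀ j : ℤ, j % 3 = 2 → AddMonoidAlgebra.coeff f j = b j • (Xinv + Yinv)) ∧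
    (∀ j : ℤ, a (3 * j + 1) = b (3 * j + 2))

/-- `Q m = ∑_{i=0}^m (YX)^i t^{2i}` for `m ≥ 0` and
`Q (-m) = ∑_{i=1}^m (X⁻¹Y⁻¹)^i t^{-2i}` for `m ≥ 1`. -/
noncomputable def Q (m : ℤ) : L :=
  if 0 ≤ m then ∑ i ∈ Finset.range (m.toNat + 1), C ((Ym * Xm) ^ i) * T (2 * (i : ℤ))
  else ∑ i ∈ Finset.range (-m).toNat, C ((Xinv * Yinv) ^ (i + 1)) * T (-(2 * ((i : ℤ) + 1)))

lemma T_mul_apply (n : ℤ) (f : L) (j : ℤ) : AddMonoidAlgebra.coeff (T n * f : L) j = AddMonoidAlgebra.coeff f (j - n) := by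
  rw [T_mul]
  simpa [sub_eq_add_neg] using AddMonoidAlgebra.coeff_mul_single_apply f (1 : M3) n j

lemma L_add_apply (f g : L) (j : ℤ) : AddMonoidAlgebra.coeff (f + g : L) j = AddMonoidAlgebra.coeff f j + AddMonoidAlgebra.coeff g j := rfl

lemma isTwin_add {f g : L} (hf : IsTwin f) (hg : IsTwin g) : IsTwin (f + g) := by
  obtain ⟨c1, c1', a1, b1, h10, h11, h12, h13⟩ := hf
  obtain ⟨c2, c2', a2, b2, h20, h21, h22, h23⟩ := hg
  refine ⟨c1 + c2, c1' + c2', a1 + a2, b1 + b2, fun j hj => ?_, fun j hj => ?_,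
    fun j hj => ?_, fun j => ?_⟩
  · simp only [L_add_apply, h10 j hj, h20 j hj, Pi.add_apply, add_smul]; abel
  · simp only [L_add_apply, h11 j hj, h21 j hj, Pi.add_apply, add_smul]
  · simp only [L_add_apply, h12 j hj, h22 j hj, Pi.add_apply, add_smul]
  · simp only [Pi.add_apply, h13 j, h23 j]

lemma isTwin_Tshift (m : ℤ) {f : L} (hf : IsTwin f) : IsTwin (T (3 * m) * f) := by
  obtain ⟨c, c', a, b, h0, h1, h2, h3⟩ := hf
  refine ⟨fun j => c (j - 3*m), fun j => c' (j - 3*m), fun j => a (j - 3*m),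
    fun j => b (j - 3*m), fun j hj => ?_, fun j hj => ?_, fun j hj => ?_, fun j => ?_⟩
  · rw [T_mul_apply]; exact h0 _ (by omega)
  · rw [T_mul_apply]; exact h1 _ (by omega)
  · rw [T_mul_apply]; exact h2 _ (by omega)
  · show a (3*j+1-3*m) = b (3*j+2-3*m)
    rw [show 3*j+1-3*m = 3*(j-m)+1 by ring, show 3*j+2-3*m = 3*(j-m)+2 by ring]
    exact h3 _

lemma hG3 : (Ym * Xm)^3 = 1 := by decide

lemma Q_natcast (m : ℕ) : Q (m:ℤ) = ∑ i ∈ Finset.range (m+1), C ((Ym*Xm)^i) * T (2*(i:ℤ)) := by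
  rw [Q, if_pos (by positivity)]
  norm_num

lemma T_mul_CT (a : ℤ) (A : M3) (b : ℤ) : T a * (C A * T b) = C A * T (a+b) := by
  rw [← mul_assoc, T_mul, mul_T_assoc]

lemma Qstep (k : ℕ) : Q (3*(k:ℤ)+5) = Q (3*(k:ℤ)+2) + T (6*(k:ℤ)+6) * Q 2 := by
  rw [show (3*(k:ℤ)+5) = ((3*k+5 : ℕ):ℤ) by push_cast; ring,
      show (3*(k:ℤ)+2) = ((3*k+2 : ℕ):ℤ) by push_cast; ring,
      show (2:ℤ) = ((2:ℕ):ℤ) by norm_num, Q_natcast, Q_natcast, Q_natcast]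
  rw [show 3*k+5+1 = (3*k+2+1)+1+1+1 by ring]
  rw [Finset.sum_range_succ, Finset.sum_range_succ, Finset.sum_range_succ]
  rw [show (Ym*Xm)^(3*k+3) = 1 by rw [show 3*k+3 = 3*(k+1) by ring, pow_mul, hG3, one_pow],
      show (Ym*Xm)^(3*k+4) = Ym*Xm by
        rw [show 3*k+4 = 3*(k+1)+1 by ring, pow_succ, pow_mul, hG3, one_pow, one_mul],
      show (Ym*Xm)^(3*k+2+1+1+1) = (Ym*Xm)^2 by
        rw [show 3*k+2+1+1+1 = 3*(k+1)+2 by ring, pow_add, pow_mul, hG3, one_pow, one_mul]]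
  simp only [Finset.sum_range_succ, Finset.sum_range_zero, zero_add, mul_add, T_mul_CT,
    pow_zero, pow_one, mul_zero, add_zero]
  push_cast
  rw [show (2:ℤ)*(3*(k:ℤ)+3) = 6*(k:ℤ)+6+0 by ring, show (2:ℤ)*(3*(k:ℤ)+4) = 6*(k:ℤ)+6+2 by ring,
      show (2:ℤ)*(3*(k:ℤ)+5) = 6*(k:ℤ)+6+4 by ring]
  abel

noncomputable def Pk (k : ℕ) : L :=
  C Yinv * T (-1) * (1 - C Ym * T 1) * Q (3 * (k:ℤ) + 2) * (C Ym * T 1) * (1 - C Xm * T 1)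

lemma mul_Tshift (f g : L) (n : ℤ) : f * (T n * g) = T n * (f * g) := by
  rw [← mul_assoc, ← T_mul, mul_assoc]

lemma Pstep_aux (A B M N Q1 Q2 : L) (n : ℤ) :
    A*B*(Q1 + T n * Q2)*M*N = A*B*Q1*M*N + T n * (A*B*Q2*M*N) := by
  simp only [mul_add, add_mul, mul_Tshift, mul_assoc]

lemma Pstep (k : ℕ) : Pk (k+1) = Pk k + T (6*(k:ℤ)+6) * Pk 0 := by
  unfold Pk
  rw [show (3*((k+1:ℕ):ℤ)+2) = 3*(k:ℤ)+5 by push_cast; ring, Qstep,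
      show (3*((0:ℕ):ℤ)+2) = (2:ℤ) by norm_num]
  exact Pstep_aux _ _ _ _ _ _ _

lemma CT_mul (A B : M3) (m n : ℤ) : (C A * T m) * (C B * T n) = C (A*B) * T (m+n) := by
  rw [mul_assoc, ← mul_assoc (T m), T_mul m (C B), mul_assoc, ← T_add, ← mul_assoc, ← map_mul]

lemma hQ2 : Q 2 = C (1:M3) * T 0 + C (Ym*Xm) * T 2 + C ((Ym*Xm)^2) * T 4 := by
  rw [show (2:ℤ) = ((2:ℕ):ℤ) by norm_num, Q_natcast]
  simp only [Finset.sum_range_succ, Finset.sum_range_zero, zero_add, pow_zero, pow_one]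
  norm_num


lemma CT_apply (A : M3) (n j : ℤ) : AddMonoidAlgebra.coeff (C A * T n : L) j = if n = j then A else 0 := by
  rw [← single_eq_C_mul_T]; exact Finsupp.single_apply

lemma L_sub_apply (f g : L) (j : ℤ) : AddMonoidAlgebra.coeff (f - g : L) j = AddMonoidAlgebra.coeff f j - AddMonoidAlgebra.coeff g j := rfl

noncomputable def E0 : L :=
  C (Yinv * Ym) * T 0 - C (Yinv * Ym * Ym) * T 1 +
      (C (Yinv * (Ym * Xm) * Ym) * T 2 - C (Yinv * Ym * (Ym * Xm) * Ym) * T 3) +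
      (C (Yinv * (Ym * Xm) ^ 2 * Ym) * T 4 - C (Yinv * Ym * (Ym * Xm) ^ 2 * Ym) * T 5) -
    (C (Yinv * Ym * Xm) * T 1 - C (Yinv * Ym * Ym * Xm) * T 2 +
        (C (Yinv * (Ym * Xm) * Ym * Xm) * T 3 - C (Yinv * Ym * (Ym * Xm) * Ym * Xm) * T 4) +
        (C (Yinv * (Ym * Xm) ^ 2 * Ym * Xm) * T 5 -
          C (Yinv * Ym * (Ym * Xm) ^ 2 * Ym * Xm) * T 6))

lemma Pk0_eq : Pk 0 = E0 := by
  unfold Pk E0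
  rw [show (3*((0:ℕ):ℤ)+2) = (2:ℤ) by norm_num, hQ2]
  simp only [mul_sub, sub_mul, mul_add, add_mul, mul_one, one_mul, CT_mul]
  norm_num only []

def cf : ℤ → ℤ := fun j => if j = 0 ∨ j = 6 then 1 else 0
def cf' : ℤ → ℤ := fun j => if j = 3 then -2 else 0
def af : ℤ → ℤ := fun j => if 1 ≤ j ∧ j ≤ 5 then -1 else 0

lemma base : IsTwin (Pk 0) := by
  rw [Pk0_eq]
  refine ⟨cf, cf', af, af, fun j hj => ?_, fun j hj => ?_, fun j hj => ?_, fun j => ?_⟩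
  · unfold E0
    simp only [L_sub_apply, L_add_apply, CT_apply]
    by_cases h0 : j = 0
    · subst h0; norm_num [cf, cf']; decide
    by_cases h3 : j = 3
    · subst h3; norm_num [cf, cf']; decide
    by_cases h6 : j = 6
    · subst h6; norm_num [cf, cf']; decide
    · norm_num [cf, cf', h0, h3, h6, show (1:ℤ) ≠ j by omega, show (2:ℤ) ≠ j by omega,
        show (4:ℤ) ≠ j by omega, show (5:ℤ) ≠ j by omega, show (0:ℤ) ≠ j by omega,
        show (3:ℤ) ≠ j by omega, show (6:ℤ) ≠ j by omega]
  · unfold E0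
    simp only [L_sub_apply, L_add_apply, CT_apply]
    by_cases h1 : j = 1
    · subst h1; norm_num [af]; decide
    by_cases h4 : j = 4
    · subst h4; norm_num [af]; decide
    · norm_num [af, show (0:ℤ) ≠ j by omega, show (1:ℤ) ≠ j by omega,
        show (2:ℤ) ≠ j by omega, show (3:ℤ) ≠ j by omega, show (4:ℤ) ≠ j by omega,
        show (5:ℤ) ≠ j by omega, show (6:ℤ) ≠ j by omega, show ¬(1 ≤ j ∧ j ≤ 5) by omega]
  · unfold E0
    simp only [L_sub_apply, L_add_apply, CT_apply]
    by_cases h2 : j = 2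
    · subst h2; norm_num [af]; decide
    by_cases h5 : j = 5
    · subst h5; norm_num [af]; decide
    · norm_num [af, show (0:ℤ) ≠ j by omega, show (1:ℤ) ≠ j by omega,
        show (2:ℤ) ≠ j by omega, show (3:ℤ) ≠ j by omega, show (4:ℤ) ≠ j by omega,
        show (5:ℤ) ≠ j by omega, show (6:ℤ) ≠ j by omega, show ¬(1 ≤ j ∧ j ≤ 5) by omega]
  · unfold af; split_ifs <;> omega

/-- For every `k ≥ 0`, `Y⁻¹t⁻¹·(I − Yt)·Q_{3k+2}(t)·Yt·(I − Xt)` is twin. -/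
theorem stmt_10 (k : ℕ) :
    IsTwin (C Yinv * T (-1) * (1 - C Ym * T 1) * Q (3 * k + 2) * (C Ym * T 1) *
      (1 - C Xm * T 1)) := by
  show IsTwin (Pk k)
  induction k with
  | zero => exact base
  | succ n ih =>
    rw [Pstep n]
    refine isTwin_add ih ?_
    rw [show (6*(n:ℤ)+6) = 3*(2*(n:ℤ)+2) by ring]
    exact isTwin_Tshift _ base
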